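/- Let k be a field, let (L, K, M) be a field correspondence over k, and let Ω be an algebraically closed field extension of k of transcendence degree 1. Form the full generic graph: its blue vertices are the k-algebra homomorphisms L → Ω, its red vertices are the k-algebra homomorphisms K → Ω, and its edges are the k-algebra homomorphisms e : M → Ω, the edge e joining the blue vertex e|_L and the red vertex e|_K. For a vertex v and an integer n ≥ 0, let H = B(v, n) be the full subgraph on all vertices at graph distance at most n from v, and let E_H ⊆ Ω be the subfield generated by the images of all vertices and edges of H, and E_v the image of v. Then the extension E_H / E_v is Galois. -/

import Mathlib

/-- A field extension `F/k` has transcendence degree one iff some single element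
forms a transcendence basis of `F` over `k`. -/
def HasTrdegOne (k F : Type*) [Field k] [Field F] [Algebra k F] : Prop :=
  ∃ x : F, IsTranscendenceBasis k (fun _ : Unit => x)

/-- For subfields `B ≤ E` of `Ω`, the extension `E/B` is Galois (normal and separable,
possibly infinite). -/
def IsGaloisOver {k Ω : Type*} [Field k] [Field Ω] [Algebra k Ω]
    (B E : IntermediateField k Ω) : Prop :=
  ∃ h : B ≤ E, IsGalois B (IntermediateField.extendScalars h)

section GenericGraph

variable {k M : Type*} [Field k] [Field M] [Algebra k M]
  (L K : IntermediateField k M)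
  (Ω : Type*) [Field Ω] [Algebra k Ω]

/-- The full generic graph of the correspondence `L ⊆ M ⊇ K`: the blue vertices are the
`k`-algebra homomorphisms `L → Ω`, the red vertices are the `k`-algebra homomorphisms
`K → Ω`, and a blue vertex `p` is adjacent to a red vertex `q` iff some `k`-algebra
homomorphism `e : M → Ω` (an edge) restricts to `p` on `L` and to `q` on `K`. -/
def genericGraph : SimpleGraph ((↥L →ₐ[k] Ω) ⊕ (↥K →ₐ[k] Ω)) where
  Adj v w :=
    match v, w with
    | Sum.inl p, Sum.inr q => ∃ e : M →ₐ[k] Ω, e.comp L.val = p ∧ e.comp K.val = q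
    | Sum.inr q, Sum.inl p => ∃ e : M →ₐ[k] Ω, e.comp L.val = p ∧ e.comp K.val = q
    | _, _ => False
  symm := ⟨by
    rintro (p | q) (p' | q') h <;> simp_all⟩
  loopless := ⟨by
    rintro (p | q) h <;> simp_all⟩

/-- The subfield of `Ω` attached to a vertex of the full generic graph: the image of the
corresponding homomorphism. -/
noncomputable def vertexField : ((↥L →ₐ[k] Ω) ⊕ (↥K →ₐ[k] Ω)) → IntermediateField k Ω
  | Sum.inl p => p.fieldRange
  | Sum.inr q => q.fieldRange

/-- The closed ball of radius `n` around a vertex `v` in the full generic graph. -/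
def genericBall (v : (↥L →ₐ[k] Ω) ⊕ (↥K →ₐ[k] Ω)) (n : ℕ) :
    Set ((↥L →ₐ[k] Ω) ⊕ (↥K →ₐ[k] Ω)) :=
  {w | (genericGraph L K Ω).Reachable v w ∧ (genericGraph L K Ω).dist v w ≤ n}

/-- The subfield `E_H ⊆ Ω` generated by the images of all vertices and all edges of the
full subgraph `H = B(v, n)` of the full generic graph. -/
noncomputable def ballField (v : (↥L →ₐ[k] Ω) ⊕ (↥K →ₐ[k] Ω)) (n : ℕ) :
    IntermediateField k Ω :=
  (⨆ w : (genericBall L K Ω v n), vertexField L K Ω w.1) ⊔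
  (⨆ e : {e : M →ₐ[k] Ω //
      Sum.inl (e.comp L.val) ∈ genericBall L K Ω v n ∧
      Sum.inr (e.comp K.val) ∈ genericBall L K Ω v n},
    (e.1).fieldRange)

end GenericGraph


open IntermediateField

section Aux

variable {k Ω : Type*} [Field k] [Field Ω] [Algebra k Ω]

lemma exchange_transcendental {t ω : Ω} (ht : Transcendental k t) (hω : Transcendental k ω)
    (h : IsAlgebraic (Algebra.adjoin k (Set.range fun _ : Unit => t)) ω) :
    IsAlgebraic (Algebra.adjoin k (Set.range fun _ : Unit => ω)) t := by
  by_contra htr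
  have hωind : AlgebraicIndependent k (fun _ : Unit => ω) :=
    algebraicIndependent_unique_type_iff.2 hω
  have htind : AlgebraicIndependent k (fun _ : Unit => t) :=
    algebraicIndependent_unique_type_iff.2 ht
  have h1 : AlgebraicIndependent k (fun o : Option Unit => o.elim t fun _ => ω) :=
    (hωind.option_iff_transcendental t).2 htr
  have h2 : AlgebraicIndependent k (fun o : Option Unit => o.elim ω fun _ => t) := by
    have h3 := h1.comp (fun o : Option Unit => o.elim (some ()) fun _ => none)
      (by decide)
    have heq : ((fun o : Option Unit => o.elim t fun _ => ω) ∘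
        fun o : Option Unit => o.elim (some ()) fun _ => none)
        = fun o : Option Unit => o.elim ω fun _ => t := by
      funext o; cases o <;> rfl
    rwa [heq] at h3
  exact ((htind.option_iff_transcendental ω).1 h2) h

lemma IsAlgebraic.tower_subset_subalgebra {K : Type*} [Field K] [Algebra K Ω]
    {A : Subalgebra k Ω} {T : IntermediateField K Ω} (h : (A : Set Ω) ⊆ (T : Set Ω)) {x : Ω}
    (hx : IsAlgebraic A x) : IsAlgebraic T x := by
  let f : A →+* T :=
    { toFun := fun a => ⟨a.1, h a.2⟩
      map_one' := rfl
      map_mul' := fun _ _ => rfl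
      map_zero' := rfl
      map_add' := fun _ _ => rfl }
  letI : Algebra A T := f.toAlgebra
  haveI : IsScalarTower A T Ω := IsScalarTower.of_algebraMap_eq fun _ => rfl
  exact hx.extendScalars (fun a b hab => Subtype.ext (show (a : Ω) = b from congrArg Subtype.val (show f a = f b from hab)))

lemma IsAlgebraic.tower_subset_intermediateField {K : Type*} [Field K] [Algebra K Ω]
    {P : IntermediateField k Ω} {T : IntermediateField K Ω} (h : (P : Set Ω) ⊆ (T : Set Ω)) {x : Ω}
    (hx : IsAlgebraic P x) : IsAlgebraic T x := by
  let f : P →+* T :=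
    { toFun := fun a => ⟨a.1, h a.2⟩
      map_one' := rfl
      map_mul' := fun _ _ => rfl
      map_zero' := rfl
      map_add' := fun _ _ => rfl }
  letI : Algebra P T := f.toAlgebra
  haveI : IsScalarTower P T Ω := IsScalarTower.of_algebraMap_eq fun _ => rfl
  exact hx.extendScalars (fun a b hab => Subtype.ext (show (a : Ω) = b from congrArg Subtype.val (show f a = f b from hab)))

lemma IsSeparable.tower_subset {K : Type*} [Field K] [Algebra K Ω]
    {P : IntermediateField k Ω} {T : IntermediateField K Ω} (h : (P : Set Ω) ⊆ (T : Set Ω)) {x : Ω}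
    (hx : IsSeparable P x) : IsSeparable T x := by
  let f : P →+* T :=
    { toFun := fun a => ⟨a.1, h a.2⟩
      map_one' := rfl
      map_mul' := fun _ _ => rfl
      map_zero' := rfl
      map_add' := fun _ _ => rfl }
  letI : Algebra P T := f.toAlgebra
  haveI : IsScalarTower P T Ω := IsScalarTower.of_algebraMap_eq fun _ => rfl
  exact IsSeparable.tower_top T hx

lemma edge_isSeparable {M : Type*} [Field M] [Algebra k M] (L : IntermediateField k M)
    [Algebra.IsSeparable L M] (e : M →ₐ[k] Ω) {x : Ω} (hx : x ∈ e.fieldRange) :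
    IsSeparable ((e.comp L.val).fieldRange) x := by
  have hPR : (e.comp L.val).fieldRange ≤ e.fieldRange := by
    rintro _ ⟨l, rfl⟩; exact ⟨L.val l, rfl⟩
  let f₁ : ↥L →+* ↥(e.comp L.val).fieldRange :=
    { toFun := fun l => ⟨e (L.val l), ⟨l, rfl⟩⟩
      map_one' := Subtype.ext (by simp)
      map_mul' := fun a b => Subtype.ext (by simp)
      map_zero' := Subtype.ext (by simp)
      map_add' := fun a b => Subtype.ext (by simp) }
  have hf₁ : Function.Bijective f₁ := by
    constructor
    · intro a b hab
      have h2 : e (L.val a) = e (L.val b) := congrArg Subtype.val hab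
      exact Subtype.val_injective (e.injective h2)
    · rintro ⟨_, ⟨l, rfl⟩⟩
      exact ⟨l, Subtype.ext rfl⟩
  let f₂ : M →+* ↥(IntermediateField.extendScalars hPR) :=
    { toFun := fun m => ⟨e m, by exact ⟨m, rfl⟩⟩
      map_one' := Subtype.ext (by simp)
      map_mul' := fun a b => Subtype.ext (by simp)
      map_zero' := Subtype.ext (by simp)
      map_add' := fun a b => Subtype.ext (by simp) }
  have hf₂ : Function.Bijective f₂ := by
    constructor
    · intro a b hab
      exact e.injective (congrArg Subtype.val hab)
    · rintro ⟨_, ⟨m, rfl⟩⟩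
      exact ⟨m, Subtype.ext rfl⟩
  haveI : Algebra.IsSeparable (↥(e.comp L.val).fieldRange) ↥(IntermediateField.extendScalars hPR) :=
    Algebra.IsSeparable.of_equiv_equiv
      (RingEquiv.ofBijective f₁ hf₁) (RingEquiv.ofBijective f₂ hf₂)
      (by ext l; rfl)
  have hsep' : IsSeparable (↥(e.comp L.val).fieldRange)
      (⟨x, hx⟩ : ↥(IntermediateField.extendScalars hPR)) :=
    Algebra.IsSeparable.isSeparable _ _
  simpa only [IsSeparable, IntermediateField.minpoly_eq] using hsep'

end Aux

/-- Lemma `Galois_closure_closed_ball`.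
For any vertex `v` of the full generic graph of a field correspondence and any `n ≥ 0`,
the subfield `E_H` generated by the images of all vertices and edges of the closed ball
`H = B(v, n)` is Galois over the image `E_v` of `v`. -/
theorem ballField_isGaloisOver_vertexField
    (k M : Type*) [Field k] [Field M] [Algebra k M]
    -- `M` is a finitely generated field extension of `k` of transcendence degree 1
    (hfg : (⊤ : IntermediateField k M).FG)
    (htr : HasTrdegOne k M)
    -- the two intermediate fields `L` and `K`, with `M/L` and `M/K` finite and separable
    (L K : IntermediateField k M)
    [FiniteDimensional L M] [FiniteDimensional K M]
    [Algebra.IsSeparable L M] [Algebra.IsSeparable K M]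
    -- an algebraically closed extension `Ω` of `k` of transcendence degree 1
    (Ω : Type*) [Field Ω] [Algebra k Ω] [IsAlgClosed Ω]
    (htrΩ : HasTrdegOne k Ω)
    -- a vertex of the full generic graph and a radius
    (v : (↥L →ₐ[k] Ω) ⊕ (↥K →ₐ[k] Ω)) (n : ℕ) :
    IsGaloisOver (vertexField L K Ω v) (ballField L K Ω v n) := by
  classical
  obtain ⟨x₀, hx₀b⟩ := htr
  have hx₀ : Transcendental k x₀ := algebraicIndependent_unique_type_iff.1 hx₀b.1
  obtain ⟨t, htb⟩ := htrΩ
  have ht : Transcendental k t := algebraicIndependent_unique_type_iff.1 htb.1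
  haveI halg := htb.isAlgebraic
  -- a transcendental element of the vertex field
  have hexω : ∃ ω ∈ vertexField L K Ω v, Transcendental k ω := by
    have key : ∀ (F : IntermediateField k M) (p : ↥F →ₐ[k] Ω),
        FiniteDimensional ↥F M → ∃ ω ∈ p.fieldRange, Transcendental k ω := by
      intro F p hFD
      have hF : ∃ y : ↥F, Transcendental k y := by
        by_contra hc
        push_neg at hc
        haveI : Algebra.IsAlgebraic k ↥F := ⟨fun y => not_not.mp (hc y)⟩
        haveI : FiniteDimensional ↥F M := hFD
        haveI : Algebra.IsAlgebraic ↥F M := Algebra.IsAlgebraic.of_finite ↥F M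
        haveI : Algebra.IsAlgebraic k M := Algebra.IsAlgebraic.trans k ↥F M
        exact hx₀ (Algebra.IsAlgebraic.isAlgebraic x₀)
      obtain ⟨y, hy⟩ := hF
      refine ⟨p y, ⟨y, rfl⟩, fun hA => hy ?_⟩
      obtain ⟨f, hf0, hfe⟩ := hA
      refine ⟨f, hf0, ?_⟩
      have h0 : p (Polynomial.aeval y f) = 0 := by
        rw [← Polynomial.aeval_algHom_apply, hfe]
      exact p.toRingHom.injective (by show p _ = p 0; rw [h0, map_zero])
    cases v with
    | inl p => exact key L p inferInstance
    | inr q => exact key K q inferInstance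
  obtain ⟨ω, hωE, hω⟩ := hexω
  have htalg : IsAlgebraic (Algebra.adjoin k (Set.range fun _ : Unit => ω)) t :=
    exchange_transcendental ht hω (Algebra.IsAlgebraic.isAlgebraic ω)
  have hωmem : ω ∈ IntermediateField.adjoin k ({ω} : Set Ω) :=
    IntermediateField.subset_adjoin k {ω} rfl
  have hsub1 : ((Algebra.adjoin k (Set.range fun _ : Unit => ω) : Subalgebra k Ω) : Set Ω)
      ⊆ ((IntermediateField.adjoin k ({ω} : Set Ω) : IntermediateField k Ω) : Set Ω) := by
    have h' : Algebra.adjoin k (Set.range fun _ : Unit => ω)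
        ≤ (IntermediateField.adjoin k ({ω} : Set Ω)).toSubalgebra :=
      Algebra.adjoin_le (by rintro _ ⟨u, rfl⟩; exact hωmem)
    exact h'
  have htFω : IsAlgebraic (IntermediateField.adjoin k ({ω} : Set Ω)) t :=
    IsAlgebraic.tower_subset_subalgebra hsub1 htalg
  haveI hFD : FiniteDimensional (IntermediateField.adjoin k ({ω} : Set Ω))
      (IntermediateField.adjoin (IntermediateField.adjoin k ({ω} : Set Ω)) ({t} : Set Ω)) :=
    IntermediateField.adjoin.finiteDimensional htFω.isIntegral
  haveI h2 : Algebra.IsAlgebraic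
      (IntermediateField.adjoin (IntermediateField.adjoin k ({ω} : Set Ω)) ({t} : Set Ω)) Ω := by
    constructor
    intro z
    refine IsAlgebraic.tower_subset_subalgebra ?_ (halg.isAlgebraic z)
    have h' : Algebra.adjoin k (Set.range fun _ : Unit => t)
        ≤ ((IntermediateField.adjoin (IntermediateField.adjoin k ({ω} : Set Ω))
            ({t} : Set Ω)).restrictScalars k).toSubalgebra :=
      Algebra.adjoin_le (by
        rintro _ ⟨u, rfl⟩
        exact IntermediateField.subset_adjoin _ {t} rfl)
    exact h'
  haveI h1 : Algebra.IsAlgebraic (IntermediateField.adjoin k ({ω} : Set Ω))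
      (IntermediateField.adjoin (IntermediateField.adjoin k ({ω} : Set Ω)) ({t} : Set Ω)) :=
    Algebra.IsAlgebraic.of_finite _ _
  haveI h3 : Algebra.IsAlgebraic (IntermediateField.adjoin k ({ω} : Set Ω)) Ω :=
    Algebra.IsAlgebraic.trans _
      (IntermediateField.adjoin (IntermediateField.adjoin k ({ω} : Set Ω)) ({t} : Set Ω)) Ω
  haveI h4 : Algebra.IsAlgebraic (vertexField L K Ω v) Ω := by
    constructor
    intro z
    refine IsAlgebraic.tower_subset_intermediateField ?_ (h3.isAlgebraic z)
    intro y hy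
    exact (IntermediateField.adjoin_le_iff.2
      (Set.singleton_subset_iff.2 hωE) : _ ≤ vertexField L K Ω v) hy
  haveI h5 : IsAlgClosure (vertexField L K Ω v) Ω := ⟨inferInstance, h4⟩
  -- separability: everything in the ball lies in the separable closure
  have hvL : ∀ e : M →ₐ[k] Ω, ((e.comp L.val).fieldRange : Set Ω) ⊆ (e.fieldRange : Set Ω) := by
    intro e
    rintro _ ⟨l, rfl⟩
    exact ⟨L.val l, rfl⟩
  have hvK : ∀ e : M →ₐ[k] Ω, ((e.comp K.val).fieldRange : Set Ω) ⊆ (e.fieldRange : Set Ω) := by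
    intro e
    rintro _ ⟨l, rfl⟩
    exact ⟨K.val l, rfl⟩
  have edgeT : ∀ e : M →ₐ[k] Ω,
      (((e.comp L.val).fieldRange : Set Ω) ⊆ (separableClosure (vertexField L K Ω v) Ω : Set Ω) ∨
       ((e.comp K.val).fieldRange : Set Ω) ⊆ (separableClosure (vertexField L K Ω v) Ω : Set Ω)) →
      (e.fieldRange : Set Ω) ⊆ (separableClosure (vertexField L K Ω v) Ω : Set Ω) := by
    rintro e (hP | hP) x hx
    · have h1 := edge_isSeparable L e hx
      have hTsep : IsSeparable (separableClosure (vertexField L K Ω v) Ω) x :=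
        IsSeparable.tower_subset hP h1
      exact IsSeparable.of_algebra_isSeparable_of_isSeparable (vertexField L K Ω v) hTsep
    · have h1 := edge_isSeparable K e hx
      have hTsep : IsSeparable (separableClosure (vertexField L K Ω v) Ω) x :=
        IsSeparable.tower_subset hP h1
      exact IsSeparable.of_algebra_isSeparable_of_isSeparable (vertexField L K Ω v) hTsep
  have hbase : ((vertexField L K Ω v : IntermediateField k Ω) : Set Ω)
      ⊆ (separableClosure (vertexField L K Ω v) Ω : Set Ω) := by
    intro x hx
    exact isSeparable_algebraMap (⟨x, hx⟩ : vertexField L K Ω v)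
  have vstep : ∀ a b, (genericGraph L K Ω).Walk a b →
      ((vertexField L K Ω a : IntermediateField k Ω) : Set Ω)
        ⊆ (separableClosure (vertexField L K Ω v) Ω : Set Ω) →
      ((vertexField L K Ω b : IntermediateField k Ω) : Set Ω)
        ⊆ (separableClosure (vertexField L K Ω v) Ω : Set Ω) := by
    intro a b w
    induction w with
    | nil => exact id
    | @cons a c b h p ih =>
      intro ha
      apply ih
      obtain p' | q' := a <;> obtain p'' | q'' := c
      · exact h.elim
      · obtain ⟨e, he1, he2⟩ := h
        subst he2
        have haP : ((e.comp L.val).fieldRange : Set Ω)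
            ⊆ (separableClosure (vertexField L K Ω v) Ω : Set Ω) := by
          rw [he1]; exact ha
        exact fun x hx => edgeT e (Or.inl haP) (hvK e hx)
      · obtain ⟨e, he1, he2⟩ := h
        subst he1
        have haP : ((e.comp K.val).fieldRange : Set Ω)
            ⊆ (separableClosure (vertexField L K Ω v) Ω : Set Ω) := by
          rw [he2]; exact ha
        exact fun x hx => edgeT e (Or.inr haP) (hvL e hx)
      · exact h.elim
  have hedge_ball : ∀ e : M →ₐ[k] Ω, Sum.inl (e.comp L.val) ∈ genericBall L K Ω v n →
      (e.fieldRange : Set Ω) ⊆ (separableClosure (vertexField L K Ω v) Ω : Set Ω) := by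
    intro e he
    obtain ⟨wk⟩ := he.1
    exact edgeT e (Or.inl (vstep _ _ wk hbase))
  have hball_sub : ∀ x ∈ ballField L K Ω v n, x ∈ separableClosure (vertexField L K Ω v) Ω := by
    have hle2 : ballField L K Ω v n ≤
        (separableClosure (vertexField L K Ω v) Ω).restrictScalars k := by
      apply sup_le
      · apply iSup_le
        rintro ⟨w, hw⟩
        obtain ⟨wk⟩ := hw.1
        intro x hx
        exact vstep _ _ wk hbase hx
      · apply iSup_le
        rintro ⟨e, heL, heR⟩
        intro x hx
        exact hedge_ball e heL hx
    exact fun x hx => hle2 hx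
  -- the vertex field is contained in the ball field
  have hvmem : v ∈ genericBall L K Ω v n :=
    ⟨SimpleGraph.Reachable.refl v, by rw [SimpleGraph.dist_self]; exact Nat.zero_le n⟩
  have hle : vertexField L K Ω v ≤ ballField L K Ω v n :=
    le_trans (le_iSup (fun w : genericBall L K Ω v n => vertexField L K Ω w.1) ⟨v, hvmem⟩)
      le_sup_left
  refine ⟨hle, ?_⟩
  haveI hsep : Algebra.IsSeparable (vertexField L K Ω v)
      (IntermediateField.extendScalars hle) :=
    (le_separableClosure_iff _ Ω _).1 (fun x hx => hball_sub x hx)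
  haveI hnorΩ : Normal (vertexField L K Ω v) Ω := IsAlgClosure.normal _ _
  haveI hnor : Normal (vertexField L K Ω v) (IntermediateField.extendScalars hle) := by
    rw [IntermediateField.normal_iff_forall_map_le]
    intro σ
    let σ' : Ω →ₐ[k] Ω := σ.restrictScalars k
    have hadj : ∀ {a b}, (genericGraph L K Ω).Adj a b →
        (genericGraph L K Ω).Adj (Sum.map (σ'.comp ·) (σ'.comp ·) a)
          (Sum.map (σ'.comp ·) (σ'.comp ·) b) := by
      rintro (p | q) (p' | q') h
      · exact h.elim
      · obtain ⟨e, he1, he2⟩ := h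
        exact ⟨σ'.comp e, by rw [AlgHom.comp_assoc, he1], by rw [AlgHom.comp_assoc, he2]⟩
      · obtain ⟨e, he1, he2⟩ := h
        exact ⟨σ'.comp e, by rw [AlgHom.comp_assoc, he1], by rw [AlgHom.comp_assoc, he2]⟩
      · exact h.elim
    let hom : genericGraph L K Ω →g genericGraph L K Ω :=
      ⟨Sum.map (σ'.comp ·) (σ'.comp ·), hadj⟩
    have hfixv : ∀ x (hx : x ∈ vertexField L K Ω v), σ' x = x := by
      intro x hx
      exact σ.commutes (⟨x, hx⟩ : vertexField L K Ω v)
    have hfix : (Sum.map (σ'.comp ·) (σ'.comp ·)) v = v := by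
      cases v with
      | inl p =>
        simp only [Sum.map_inl]
        congr 1
        ext y
        exact hfixv (p y) ⟨y, rfl⟩
      | inr q =>
        simp only [Sum.map_inr]
        congr 1
        ext y
        exact hfixv (q y) ⟨y, rfl⟩
    have hmapball : ∀ w ∈ genericBall L K Ω v n, hom w ∈ genericBall L K Ω v n := by
      rintro w ⟨hr, hd⟩
      obtain ⟨pw, hlen⟩ := hr.exists_walk_length_eq_dist
      refine ⟨⟨(pw.map hom).copy hfix rfl⟩, ?_⟩
      calc (genericGraph L K Ω).dist v (hom w) ≤ ((pw.map hom).copy hfix rfl).length :=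
            SimpleGraph.dist_le _
        _ ≤ n := by
          rw [SimpleGraph.Walk.length_copy, SimpleGraph.Walk.length_map, hlen]
          exact hd
    have hmaple : ((⨆ w : genericBall L K Ω v n, vertexField L K Ω w.1) ⊔
        (⨆ e : {e : M →ₐ[k] Ω // Sum.inl (e.comp L.val) ∈ genericBall L K Ω v n ∧
          Sum.inr (e.comp K.val) ∈ genericBall L K Ω v n}, (e.1).fieldRange)).map σ'
        ≤ ballField L K Ω v n := by
      rw [IntermediateField.map_sup, IntermediateField.map_iSup, IntermediateField.map_iSup]
      apply sup_le
      · apply iSup_le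
        rintro ⟨w, hw⟩
        have heq : (vertexField L K Ω w).map σ' = vertexField L K Ω (hom w) := by
          obtain p | q := w
          · exact AlgHom.map_fieldRange _ _
          · exact AlgHom.map_fieldRange _ _
        rw [heq]
        exact le_trans (le_iSup (fun u : genericBall L K Ω v n => vertexField L K Ω u.1)
          ⟨hom w, hmapball w hw⟩) le_sup_left
      · apply iSup_le
        rintro ⟨e, heL, heR⟩
        have heq : (e.fieldRange).map σ' = (σ'.comp e).fieldRange := AlgHom.map_fieldRange _ _
        rw [heq]
        have hL' : Sum.inl ((σ'.comp e).comp L.val) ∈ genericBall L K Ω v n := by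
          rw [AlgHom.comp_assoc]
          exact hmapball _ heL
        have hR' : Sum.inr ((σ'.comp e).comp K.val) ∈ genericBall L K Ω v n := by
          rw [AlgHom.comp_assoc]
          exact hmapball _ heR
        refine le_trans (le_iSup (fun u : {e : M →ₐ[k] Ω //
          Sum.inl (e.comp L.val) ∈ genericBall L K Ω v n ∧
          Sum.inr (e.comp K.val) ∈ genericBall L K Ω v n} => (u.1).fieldRange)
          ⟨σ'.comp e, hL', hR'⟩) le_sup_right
    intro x hx
    obtain ⟨y, hy, rfl⟩ := hx
    have hy' : y ∈ ballField L K Ω v n := hy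
    exact hmaple ⟨y, hy', rfl⟩
  exact { to_isSeparable := hsep, to_normal := hnor }
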